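/- Let D ⊂ ℂ^n be bounded, strongly ℂ-linearly convex and of class C^{1,1}. For ζ ∈ bD and small ε > 0, let z_ε = ζ + εν_ζ where ν_ζ is the inner unit normal at ζ. Then |Δ(w,ζ)| + ε ≈ |Δ(w, z_ε)| uniformly for all ζ, w ∈ bD and all sufficiently small ε, where Δ(w,z) = ⟨∂ρ(w), w−z⟩. -/

import Mathlib

/-- The Leray pairing `Δ(w,z) = ⟨∂ρ(w), w−z⟩`. -/
noncomputable def cplxPair {n : ℕ}
    (pc : EuclideanSpace ℂ (Fin n) → EuclideanSpace ℂ (Fin n))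
    (w z : EuclideanSpace ℂ (Fin n)) : ℂ :=
  ∑ j, pc w j * (w j - z j)

/-- Cauchy–Schwarz for the bilinear (not sesquilinear) pairing on `ℂⁿ`. -/
lemma cs_sum {n : ℕ} (a b : EuclideanSpace ℂ (Fin n)) :
    ‖∑ j, a j * b j‖ ≤ ‖a‖ * ‖b‖ := by
  calc ‖∑ j, a j * b j‖ ≤ ∑ j, ‖a j * b j‖ :=
        norm_sum_le _ _
    _ = ∑ j, ‖a j‖ * ‖b j‖ := by simp [norm_mul]
    _ ≤ Real.sqrt (∑ j, ‖a j‖ ^ 2) * Real.sqrt (∑ j, ‖b j‖ ^ 2) :=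
        Real.sum_mul_le_sqrt_mul_sqrt _ _ _
    _ = ‖a‖ * ‖b‖ := by rw [EuclideanSpace.norm_eq, EuclideanSpace.norm_eq]

/-- One-sided first-order Taylor estimate for a `C^1` function with Lipschitz derivative. -/
lemma taylor_aux {n : ℕ} (ρ : EuclideanSpace ℂ (Fin n) → ℝ)
    (hρ1 : ContDiff ℝ 1 ρ) (K1 : ℝ)
    (hLip : ∀ x y (v : EuclideanSpace ℂ (Fin n)),
      |fderiv ℝ ρ x v - fderiv ℝ ρ y v| ≤ 2 * K1 * ‖x - y‖ * ‖v‖)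
    (x v : EuclideanSpace ℂ (Fin n)) :
    ρ (x + v) ≤ ρ x + fderiv ℝ ρ x v + K1 * ‖v‖ ^ 2 := by
  set ψ : ℝ → ℝ := fun t => ρ (x + t • v) - t * fderiv ℝ ρ x v - K1 * t ^ 2 * ‖v‖ ^ 2 with hψ
  have hline : ∀ t : ℝ, HasDerivAt (fun s : ℝ => x + s • v) v t := by
    intro t
    simpa using ((hasDerivAt_id t).smul_const v).const_add x
  have hd : ∀ t : ℝ, HasDerivAt ψ
      (fderiv ℝ ρ (x + t • v) v - fderiv ℝ ρ x v - K1 * (2 * t) * ‖v‖ ^ 2) t := by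
    intro t
    have h1 : HasDerivAt (fun s : ℝ => ρ (x + s • v)) (fderiv ℝ ρ (x + t • v) v) t :=
      (((hρ1.differentiable one_ne_zero) (x + t • v)).hasFDerivAt).comp_hasDerivAt t (hline t)
    have h2 : HasDerivAt (fun s : ℝ => s * fderiv ℝ ρ x v) (fderiv ℝ ρ x v) t := by
      simpa using (hasDerivAt_id t).mul_const (fderiv ℝ ρ x v)
    have h3 : HasDerivAt (fun s : ℝ => K1 * s ^ 2 * ‖v‖ ^ 2) (K1 * (2 * t) * ‖v‖ ^ 2) t := by
      have := (hasDerivAt_pow 2 t).const_mul K1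
      simpa [mul_comm, mul_assoc, mul_left_comm] using this.mul_const (‖v‖ ^ 2)
    exact (h1.sub h2).sub h3
  have hmono : AntitoneOn ψ (Set.Icc (0:ℝ) 1) := by
    apply antitoneOn_of_deriv_nonpos (convex_Icc 0 1)
    · exact fun t _ => ((hd t).continuousAt).continuousWithinAt
    · exact fun t _ => ((hd t).differentiableAt).differentiableWithinAt
    · intro t ht
      rw [interior_Icc] at ht
      rw [(hd t).deriv]
      have hb := hLip (x + t • v) x v
      have hxy : ‖(x + t • v) - x‖ = t * ‖v‖ := by
        simp [norm_smul, abs_of_pos ht.1]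
      rw [hxy] at hb
      have : fderiv ℝ ρ (x + t • v) v - fderiv ℝ ρ x v ≤ 2 * K1 * (t * ‖v‖) * ‖v‖ :=
        (le_abs_self _).trans hb
      nlinarith [this, sq_nonneg ‖v‖]
  have h01 : ψ 1 ≤ ψ 0 := hmono (Set.mem_Icc.2 ⟨le_rfl, zero_le_one⟩)
    (Set.mem_Icc.2 ⟨zero_le_one, le_rfl⟩) zero_le_one
  simp only [hψ, one_smul, zero_smul, add_zero, one_pow, one_mul, zero_pow, zero_mul,
    mul_zero, sub_zero] at h01
  linarith

/-- A point of `{ρ = 0}` with nonvanishing gradient is in the closure of `{ρ < 0}`. -/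
lemma bd_in_closure {n : ℕ} (ρ : EuclideanSpace ℂ (Fin n) → ℝ)
    (hρ1 : ContDiff ℝ 1 ρ) (ζ : EuclideanSpace ℂ (Fin n)) (hζ : ρ ζ = 0)
    (hg : fderiv ℝ ρ ζ ≠ 0) : ζ ∈ closure {z | ρ z < 0} := by
  obtain ⟨v, hv⟩ : ∃ v, fderiv ℝ ρ ζ v ≠ 0 := by
    by_contra h
    push_neg at h
    exact hg (ContinuousLinearMap.ext fun v => by simpa using h v)
  set u : EuclideanSpace ℂ (Fin n) := if fderiv ℝ ρ ζ v < 0 then v else -v with hu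
  have hLu : fderiv ℝ ρ ζ u < 0 := by
    rw [hu]
    split_ifs with h
    · exact h
    · rw [map_neg]
      push_neg at h
      have := lt_of_le_of_ne h (Ne.symm hv)
      linarith
  have hφ : HasDerivAt (fun t : ℝ => ρ (ζ + t • u)) (fderiv ℝ ρ ζ u) 0 := by
    have hline : HasDerivAt (fun s : ℝ => ζ + s • u) u 0 := by
      simpa using ((hasDerivAt_id (0:ℝ)).smul_const u).const_add ζ
    have := (((hρ1.differentiable one_ne_zero) (ζ + (0:ℝ) • u)).hasFDerivAt).comp_hasDerivAt 0 hline
    rw [zero_smul, add_zero] at this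
    exact this
  have hslope := hasDerivAt_iff_tendsto_slope.1 hφ
  have hev : ∀ᶠ t in nhdsWithin (0:ℝ) (Set.Ioi 0), ρ (ζ + t • u) < 0 := by
    have h1 : ∀ᶠ t in nhdsWithin (0:ℝ) ({0}ᶜ), slope (fun t : ℝ => ρ (ζ + t • u)) 0 t < 0 :=
      hslope.eventually (gt_mem_nhds hLu)
    have hle : nhdsWithin (0:ℝ) (Set.Ioi 0) ≤ nhdsWithin (0:ℝ) ({0}ᶜ) :=
      nhdsWithin_mono 0 (fun t ht => ne_of_gt ht)
    filter_upwards [hle h1, self_mem_nhdsWithin] with t ht h0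
    have h0' : (0:ℝ) < t := h0
    rw [slope_def_field] at ht
    simp only [zero_smul, add_zero, hζ, sub_zero] at ht
    have := div_neg_iff.1 ht
    rcases this with ⟨h1', h2'⟩ | ⟨h1', h2'⟩
    · linarith
    · exact h1'
  have htend : Filter.Tendsto (fun t : ℝ => ζ + t • u) (nhdsWithin (0:ℝ) (Set.Ioi 0)) (nhds ζ) := by
    have : Continuous (fun t : ℝ => ζ + t • u) :=
      continuous_const.add (continuous_id.smul continuous_const)
    have h2 := (this.tendsto 0).mono_left (nhdsWithin_le_nhds (s := Set.Ioi (0:ℝ)))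
    simpa using h2
  exact mem_closure_of_tendsto htend hev

set_option maxHeartbeats 2000000 in
/-- For a bounded, strongly ℂ-linearly convex `C^{1,1}` domain, with `ν_ζ` the inner unit
normal at `ζ ∈ bD` and `z_ε = ζ + εν_ζ`, one has `|Δ(w,ζ)| + ε ≈ |Δ(w,z_ε)|` uniformly for
`ζ, w ∈ bD` and all sufficiently small `ε > 0`. -/
theorem delta_normal_displacement (n : ℕ) (hn : 2 ≤ n)
    (ρ : EuclideanSpace ℂ (Fin n) → ℝ)
    (D : Set (EuclideanSpace ℂ (Fin n)))
    (hD : D = {z | ρ z < 0}) (hbdd : Bornology.IsBounded D)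
    (hρ1 : ContDiff ℝ 1 ρ)
    (pc : EuclideanSpace ℂ (Fin n) → EuclideanSpace ℂ (Fin n))
    (hpc : ∀ w v, fderiv ℝ ρ w v = 2 * (∑ j, pc w j * v j).re)
    (Kpc : NNReal) (hpcLip : LipschitzWith Kpc pc)
    (hgrad : ∀ w, ρ w = 0 → fderiv ℝ ρ w ≠ 0)
    (c₀ : ℝ) (hc₀ : 0 < c₀)
    (hconv : ∀ z, ρ z ≤ 0 → ∀ w, ρ w = 0 →
      c₀ * ‖w - z‖ ^ 2 ≤ ‖cplxPair pc w z‖)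
    (ν : EuclideanSpace ℂ (Fin n) → EuclideanSpace ℂ (Fin n))
    (hνunit : ∀ ζ, ρ ζ = 0 → ‖ν ζ‖ = 1)
    (hν : ∀ ζ, ρ ζ = 0 → ∀ v, fderiv ℝ ρ ζ v =
      -‖fderiv ℝ ρ ζ‖ * (inner ℂ (ν ζ) v : ℂ).re) :
    ∃ ε₀ C₁ C₂ : ℝ, 0 < ε₀ ∧ 0 < C₁ ∧ 0 < C₂ ∧
      ∀ ε : ℝ, 0 < ε → ε ≤ ε₀ → ∀ ζ w, ρ ζ = 0 → ρ w = 0 →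
        C₁ * (‖cplxPair pc w ζ‖ + ε) ≤
            ‖cplxPair pc w (ζ + ε • ν ζ)‖ ∧
          ‖cplxPair pc w (ζ + ε • ν ζ)‖ ≤
            C₂ * (‖cplxPair pc w ζ‖ + ε) := by
  classical
  by_cases hSe : ∃ z, ρ z = 0
  case neg =>
    exact ⟨1, 1, 1, one_pos, one_pos, one_pos,
      fun ε _ _ ζ w hζ _ => absurd ⟨ζ, hζ⟩ hSe⟩
  obtain ⟨z₀, hz₀⟩ := hSe
  obtain ⟨K1, hK1def⟩ : ∃ x : ℝ, x = (Kpc : ℝ) + 1 := ⟨_, rfl⟩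
  have hK1pos : 0 < K1 := by rw [hK1def]; positivity
  have hpcdist : ∀ x y, ‖pc x - pc y‖ ≤ K1 * ‖x - y‖ := by
    intro x y
    have h1 := hpcLip.dist_le_mul x y
    rw [dist_eq_norm, dist_eq_norm] at h1
    have h2 : (Kpc : ℝ) * ‖x - y‖ ≤ K1 * ‖x - y‖ := by
      have : (Kpc : ℝ) ≤ K1 := by rw [hK1def]; linarith
      exact mul_le_mul_of_nonneg_right this (norm_nonneg _)
    exact h1.trans h2
  -- pointwise formula for the difference of sums
  have hsum_sub : ∀ (a b v : EuclideanSpace ℂ (Fin n)),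
      (∑ j, a j * v j) - (∑ j, b j * v j) = ∑ j, (a - b) j * v j := by
    intro a b v
    rw [← Finset.sum_sub_distrib]
    refine Finset.sum_congr rfl fun j _ => ?_
    have : (a - b) j = a j - b j := rfl
    rw [this]; ring
  have hLip : ∀ x y (v : EuclideanSpace ℂ (Fin n)),
      |fderiv ℝ ρ x v - fderiv ℝ ρ y v| ≤ 2 * K1 * ‖x - y‖ * ‖v‖ := by
    intro x y v
    rw [hpc, hpc, ← mul_sub, ← Complex.sub_re, hsum_sub, abs_mul, abs_two]
    have h1 : |(∑ j, (pc x - pc y) j * v j).re| ≤ ‖∑ j, (pc x - pc y) j * v j‖ :=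
      Complex.abs_re_le_norm _
    have h2 := cs_sum (pc x - pc y) v
    have h3 : ‖pc x - pc y‖ * ‖v‖ ≤ (K1 * ‖x - y‖) * ‖v‖ :=
      mul_le_mul_of_nonneg_right (hpcdist x y) (norm_nonneg _)
    nlinarith [norm_nonneg v, norm_nonneg (pc x - pc y)]
  have hTaylor := taylor_aux ρ hρ1 K1 hLip
  have hTaylor' : ∀ x v : EuclideanSpace ℂ (Fin n),
      ρ x + fderiv ℝ ρ x v - 3 * K1 * ‖v‖ ^ 2 ≤ ρ (x + v) := by
    intro x v
    have h1 := hTaylor (x + v) (-v)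
    have h2 : x + v + -v = x := by abel
    have hmn : ∀ (y u : EuclideanSpace ℂ (Fin n)), fderiv ℝ ρ y (-u) = -fderiv ℝ ρ y u :=
      fun y u => map_neg _ _
    rw [h2, hmn, norm_neg] at h1
    have h4 := hLip x (x + v) v
    have h5 : ‖x - (x + v)‖ = ‖v‖ := by
      have : x - (x + v) = -v := by abel
      rw [this, norm_neg]
    rw [h5] at h4
    have h6 : fderiv ℝ ρ x v - fderiv ℝ ρ (x + v) v ≤ 2 * K1 * ‖v‖ * ‖v‖ :=
      (le_abs_self _).trans h4
    nlinarith [h1, h6, sq_nonneg ‖v‖]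
  -- compactness of the zero set
  have hSne : Set.Nonempty {z | ρ z = 0} := ⟨z₀, hz₀⟩
  have hScl : IsClosed {z | ρ z = 0} := isClosed_eq hρ1.continuous continuous_const
  have hSsub : {z | ρ z = 0} ⊆ closure D := by
    intro ζ hζ
    rw [hD]
    exact bd_in_closure ρ hρ1 ζ hζ (hgrad ζ hζ)
  have hSbd : Bornology.IsBounded {z | ρ z = 0} := (hbdd.closure).subset hSsub
  have hScomp : IsCompact {z | ρ z = 0} := Metric.isCompact_of_isClosed_isBounded hScl hSbd
  have hFcont : Continuous fun z => ‖fderiv ℝ ρ z‖ := (hρ1.continuous_fderiv one_ne_zero).norm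
  obtain ⟨ζm, hζmS, hζmin⟩ := hScomp.exists_isMinOn hSne hFcont.continuousOn
  obtain ⟨wm, hwmS, hwmax⟩ := hScomp.exists_isMaxOn hSne hpcLip.continuous.norm.continuousOn
  obtain ⟨μ, hμdef⟩ : ∃ x : ℝ, x = ‖fderiv ℝ ρ ζm‖ / 2 := ⟨_, rfl⟩
  have hμpos : 0 < μ := by
    have h1 : fderiv ℝ ρ ζm ≠ 0 := hgrad ζm hζmS
    have h2 : 0 < ‖fderiv ℝ ρ ζm‖ := norm_pos_iff.2 h1
    rw [hμdef]; positivity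
  have hμle : ∀ ζ, ρ ζ = 0 → 2 * μ ≤ ‖fderiv ℝ ρ ζ‖ := by
    intro ζ hζ
    have h1 : ‖fderiv ℝ ρ ζm‖ ≤ ‖fderiv ℝ ρ ζ‖ := isMinOn_iff.1 hζmin ζ hζ
    rw [hμdef]
    linarith [h1]
  obtain ⟨P, hPdef⟩ : ∃ x : ℝ, x = ‖pc wm‖ + 1 := ⟨_, rfl⟩
  have hP1 : 1 ≤ P := by
    have := norm_nonneg (pc wm); rw [hPdef]; linarith
  have hPpos : 0 < P := by linarith
  have hPle : ∀ w, ρ w = 0 → ‖pc w‖ ≤ P := by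
    intro w hw
    have h1 : ‖pc w‖ ≤ ‖pc wm‖ := isMaxOn_iff.1 hwmax w hw
    rw [hPdef]
    linarith [h1]
  -- the constants
  obtain ⟨C₁, hC₁def⟩ : ∃ x : ℝ, x =
      min (min (1/3) (μ / (2 * (2 * P + 1)))) (c₀ * μ / (24 * K1 * (2 * P + 1))) := ⟨_, rfl⟩
  have hC₁pos : 0 < C₁ := by
    rw [hC₁def]
    have h1 : (0:ℝ) < 1/3 := by norm_num
    have h2 : (0:ℝ) < μ / (2 * (2 * P + 1)) := by positivity
    have h3 : (0:ℝ) < c₀ * μ / (24 * K1 * (2 * P + 1)) := by positivity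
    exact lt_min (lt_min h1 h2) h3
  have hC₁a : C₁ ≤ 1/3 := by
    rw [hC₁def]; exact le_trans (min_le_left _ _) (min_le_left _ _)
  have hC₁b : C₁ * (2 * (2 * P + 1)) ≤ μ := by
    have h1 : C₁ ≤ μ / (2 * (2 * P + 1)) := by
      rw [hC₁def]; exact le_trans (min_le_left _ _) (min_le_right _ _)
    have h2 : (0:ℝ) < 2 * (2 * P + 1) := by positivity
    calc C₁ * (2 * (2 * P + 1)) ≤ (μ / (2 * (2 * P + 1))) * (2 * (2 * P + 1)) :=
          mul_le_mul_of_nonneg_right h1 (le_of_lt h2)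
      _ = μ := by field_simp
  have hC₁c : C₁ * (24 * K1 * (2 * P + 1)) ≤ c₀ * μ := by
    have h1 : C₁ ≤ c₀ * μ / (24 * K1 * (2 * P + 1)) := by
      rw [hC₁def]; exact min_le_right _ _
    have h2 : (0:ℝ) < 24 * K1 * (2 * P + 1) := by positivity
    calc C₁ * (24 * K1 * (2 * P + 1)) ≤ (c₀ * μ / (24 * K1 * (2 * P + 1)))
            * (24 * K1 * (2 * P + 1)) := mul_le_mul_of_nonneg_right h1 (le_of_lt h2)
      _ = c₀ * μ := by field_simp
  refine ⟨μ / (24 * K1), C₁, P, by positivity, hC₁pos, hPpos, ?_⟩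
  intro ε hε hεε₀ ζ w hζ hw
  have h24 : 24 * K1 * ε ≤ μ := by
    rw [le_div_iff₀ (by positivity : (0:ℝ) < 24 * K1)] at hεε₀
    linarith [hεε₀]
  -- abbreviations
  obtain ⟨d, hddef⟩ : ∃ x : ℝ, x = ‖w - ζ‖ := ⟨_, rfl⟩
  have hd0 : 0 ≤ d := by rw [hddef]; exact norm_nonneg _
  obtain ⟨Δ, hΔdef⟩ : ∃ x : ℂ, x = cplxPair pc w ζ := ⟨_, rfl⟩
  obtain ⟨q, hqdef⟩ : ∃ x : ℂ, x = ∑ j, pc w j * ν ζ j := ⟨_, rfl⟩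
  obtain ⟨Δε, hΔεdef⟩ : ∃ x : ℂ, x = cplxPair pc w (ζ + ε • ν ζ) := ⟨_, rfl⟩
  rw [← hΔdef, ← hΔεdef]
  -- the key algebraic identity
  have key : Δε = Δ - (ε:ℂ) * q := by
    rw [hΔdef, hqdef, hΔεdef]
    unfold cplxPair
    rw [Finset.mul_sum, ← Finset.sum_sub_distrib]
    refine Finset.sum_congr rfl fun j _ => ?_
    have h1 : (ζ + ε • ν ζ) j = ζ j + (ε:ℂ) * ν ζ j := by
      have : (ζ + ε • ν ζ) j = ζ j + ε • (ν ζ j) := rfl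
      rw [this, Complex.real_smul]
    rw [h1]; ring
  have hqabs : ‖q‖ ≤ P := by
    rw [hqdef]
    have h1 := cs_sum (pc w) (ν ζ)
    rw [hνunit ζ hζ, mul_one] at h1
    exact h1.trans (hPle w hw)
  have hΔlow : c₀ * d ^ 2 ≤ ‖Δ‖ := by
    rw [hddef, hΔdef]; exact hconv ζ (le_of_eq hζ) w hw
  have hΔ0 : 0 ≤ ‖Δ‖ := norm_nonneg _
  -- real part lower bound for Δ
  have hre : -(3 * K1 / 2) * d ^ 2 ≤ Δ.re := by
    have hT := hTaylor' w (ζ - w)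
    have h1 : w + (ζ - w) = ζ := by abel
    rw [h1, hw, hζ] at hT
    have h2 : fderiv ℝ ρ w (ζ - w) = -(2 * Δ.re) := by
      rw [hpc]
      have h3 : (∑ j, pc w j * (ζ - w) j) = -Δ := by
        rw [hΔdef]
        unfold cplxPair
        rw [← Finset.sum_neg_distrib]
        refine Finset.sum_congr rfl fun j _ => ?_
        have : (ζ - w) j = ζ j - w j := rfl
        rw [this]; ring
      rw [h3, Complex.neg_re]; ring
    rw [h2] at hT
    have h4 : ‖ζ - w‖ = d := by rw [hddef, norm_sub_rev]
    rw [h4] at hT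
    nlinarith [hT, sq_nonneg d]
  -- bound on the real part of q
  have hq_re : q.re ≤ -μ + K1 * d := by
    obtain ⟨qζ, hqζdef⟩ : ∃ x : ℂ, x = ∑ j, pc ζ j * ν ζ j := ⟨_, rfl⟩
    have h1 : 2 * qζ.re = -‖fderiv ℝ ρ ζ‖ := by
      have h2 := hpc ζ (ν ζ)
      have h3 := hν ζ hζ (ν ζ)
      have h4 : (inner ℂ (ν ζ) (ν ζ) : ℂ).re = 1 := by
        rw [inner_self_eq_norm_sq_to_K (𝕜 := ℂ) (ν ζ), hνunit ζ hζ]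
        norm_num
      rw [h4, mul_one] at h3
      rw [← hqζdef] at h2
      linarith [h2.symm.trans h3]
    have h5 : 2 * μ ≤ ‖fderiv ℝ ρ ζ‖ := hμle ζ hζ
    have h6 : ‖q - qζ‖ ≤ K1 * d := by
      rw [hqdef, hqζdef, hsum_sub, hddef]
      have h7 := cs_sum (pc w - pc ζ) (ν ζ)
      rw [hνunit ζ hζ, mul_one] at h7
      exact h7.trans (hpcdist w ζ)
    have h8 : q.re - qζ.re ≤ K1 * d := by
      have h9 := (Complex.re_le_norm (q - qζ)).trans h6
      rw [Complex.sub_re] at h9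
      linarith
    linarith
  -- z_ε is in the closed domain
  have hρzε : ρ (ζ + ε • ν ζ) ≤ 0 := by
    have hT := hTaylor ζ (ε • ν ζ)
    have h1 : fderiv ℝ ρ ζ (ε • ν ζ) = ε * fderiv ℝ ρ ζ (ν ζ) := by
      rw [map_smul]; rfl
    have h2 : fderiv ℝ ρ ζ (ν ζ) = -‖fderiv ℝ ρ ζ‖ := by
      have h3 := hν ζ hζ (ν ζ)
      have h4 : (inner ℂ (ν ζ) (ν ζ) : ℂ).re = 1 := by
        rw [inner_self_eq_norm_sq_to_K (𝕜 := ℂ) (ν ζ), hνunit ζ hζ]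
        norm_num
      rw [h4, mul_one] at h3
      exact h3
    have h5 : ‖ε • ν ζ‖ = ε := by
      rw [norm_smul, hνunit ζ hζ, Real.norm_eq_abs, abs_of_pos hε, mul_one]
    rw [hζ, h1, h2, h5] at hT
    have h6 : 2 * μ ≤ ‖fderiv ℝ ρ ζ‖ := hμle ζ hζ
    obtain ⟨r, hr⟩ : ∃ x : ℝ, x = ρ (ζ + ε • ν ζ) := ⟨_, rfl⟩
    obtain ⟨G, hG⟩ : ∃ x : ℝ, x = ‖fderiv ℝ ρ ζ‖ := ⟨_, rfl⟩
    rw [← hr, ← hG] at hT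
    rw [← hG] at h6
    rw [← hr]
    nlinarith [hT, h24, h6, hε.le, hK1pos.le, hμpos.le]
  have hεq : ‖(ε:ℂ) * q‖ = ε * ‖q‖ := by
    rw [norm_mul, Complex.norm_real, Real.norm_eq_abs, abs_of_pos hε]
  constructor
  · -- lower bound
    rcases le_or_gt (2 * P * ε) (‖Δ‖) with hI | hII
    · -- Case I : |Δ| large
      have h1 : ‖Δ‖ ≤ ‖Δε‖ + ε * ‖q‖ := by
        have h2 := norm_add_le (Δ - (ε:ℂ) * q) ((ε:ℂ) * q)
        rw [sub_add_cancel, hεq] at h2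
        rw [key]
        exact h2
      have h3 : ε * ‖q‖ ≤ ε * P := mul_le_mul_of_nonneg_left hqabs hε.le
      have h4 : ‖Δ‖ / 2 ≤ ‖Δε‖ := by nlinarith
      have h5 : ε ≤ ‖Δ‖ / 2 := by nlinarith
      nlinarith [hC₁a, h4, h5, hΔ0]
    · -- Case II : |Δ| < 2Pε
      rcases le_or_gt (d ^ 2 * (6 * K1)) (ε * μ) with hIIa | hIIb
      · -- Case II.a : w close to ζ, use the real part
        have hda : K1 * d ≤ μ / 12 := by
          nlinarith [sq_nonneg (K1 * d - μ / 12), hd0, hμpos.le, hK1pos, hε,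
            mul_le_mul_of_nonneg_left h24 hμpos.le, hIIa]
        have hre_ε : ε * μ / 2 ≤ Δε.re := by
          have h1 : Δε.re = Δ.re - ε * q.re := by
            rw [key, Complex.sub_re, Complex.mul_re, Complex.ofReal_re, Complex.ofReal_im]
            ring
          have h3 : μ - K1 * d ≤ -q.re := by linarith [hq_re]
          have h2 : ε * (μ - K1 * d) ≤ ε * (-q.re) := mul_le_mul_of_nonneg_left h3 hε.le
          have h4 : ε * (K1 * d) ≤ ε * (μ / 12) := mul_le_mul_of_nonneg_left hda hε.le
          have h5 : 3 * K1 / 2 * d ^ 2 ≤ ε * μ / 4 := by nlinarith [hIIa]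
          rw [h1]
          nlinarith [hre, h2, h4, h5]
        have h6 : Δε.re ≤ ‖Δε‖ := Complex.re_le_norm _
        have h7 : ‖Δ‖ + ε ≤ (2 * P + 1) * ε := by linarith [hII.le]
        have h8 : C₁ * ((2 * P + 1) * ε) ≤ μ * ε / 2 := by nlinarith [hε.le]
        have h9 : C₁ * (‖Δ‖ + ε) ≤ C₁ * ((2 * P + 1) * ε) :=
          mul_le_mul_of_nonneg_left h7 hC₁pos.le
        nlinarith [h6, hre_ε, h8, h9]
      · -- Case II.b : use strong convexity at z_ε
        have h2ε : 2 * ε ≤ d := by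
          have m1 : 24 * K1 * ε * ε ≤ μ * ε := mul_le_mul_of_nonneg_right h24 hε.le
          have m3 : 4 * ε ^ 2 < d ^ 2 := by nlinarith [m1, hIIb, hK1pos]
          nlinarith [m3, hd0, hε]
        have hnorm : d / 2 ≤ ‖w - (ζ + ε • ν ζ)‖ := by
          have h1 : w - (ζ + ε • ν ζ) = (w - ζ) - ε • ν ζ := by abel
          have h2 : ‖w - ζ‖ - ‖ε • ν ζ‖ ≤ ‖(w - ζ) - ε • ν ζ‖ := norm_sub_norm_le _ _
          have h3 : ‖ε • ν ζ‖ = ε := by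
            rw [norm_smul, hνunit ζ hζ, Real.norm_eq_abs, abs_of_pos hε, mul_one]
          rw [← hddef, h3] at h2
          rw [h1]
          linarith [h2]
        have hc : c₀ * ‖w - (ζ + ε • ν ζ)‖ ^ 2 ≤ ‖Δε‖ := by
          rw [hΔεdef]; exact hconv (ζ + ε • ν ζ) hρzε w hw
        have h4 : c₀ * (d / 2) ^ 2 ≤ ‖Δε‖ := by
          have h5 : (d / 2) ^ 2 ≤ ‖w - (ζ + ε • ν ζ)‖ ^ 2 := by
            have := norm_nonneg (w - (ζ + ε • ν ζ))
            nlinarith [hnorm, hd0]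
          nlinarith [hc, hc₀]
        have h6 : c₀ * (ε * μ) / (24 * K1) ≤ c₀ * (d / 2) ^ 2 := by
          rw [div_le_iff₀ (by positivity : (0:ℝ) < 24 * K1)]
          nlinarith [hIIb, hc₀]
        have h7 : ‖Δ‖ + ε ≤ (2 * P + 1) * ε := by linarith [hII.le]
        have h8 : C₁ * (‖Δ‖ + ε) ≤ C₁ * ((2 * P + 1) * ε) :=
          mul_le_mul_of_nonneg_left h7 hC₁pos.le
        have h9 : C₁ * ((2 * P + 1) * ε) * (24 * K1) ≤ c₀ * μ * ε := by
          nlinarith [hC₁c, hε.le]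
        have h10 : C₁ * ((2 * P + 1) * ε) ≤ c₀ * (ε * μ) / (24 * K1) := by
          rw [le_div_iff₀ (by positivity : (0:ℝ) < 24 * K1)]
          nlinarith [h9]
        linarith [h8, h10, h6, h4]
  · -- upper bound
    have h1 : ‖Δε‖ ≤ ‖Δ‖ + ε * ‖q‖ := by
      rw [key, sub_eq_add_neg]
      calc ‖Δ + -((ε:ℂ) * q)‖ ≤ ‖Δ‖ + ‖-((ε:ℂ) * q)‖ :=
            norm_add_le _ _
        _ = ‖Δ‖ + ε * ‖q‖ := by rw [norm_neg, hεq]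
    have h2 : ε * ‖q‖ ≤ ε * P := mul_le_mul_of_nonneg_left hqabs hε.le
    nlinarith [h1, h2, hΔ0, hP1, hε.le]
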